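/- arXiv:1312.7638 — 4 statements merged into one kernel-verified Lean document; each statement's English description precedes it below -/
import Mathlib

section
/- For a bounded continuous function φ : ℝ → ℝ and β > 0, the function y = Z_β φ is differentiable and satisfies the linear ODE y'(t) = -β y(t) + φ(t) for all t ∈ ℝ. -/
open MeasureTheory Real Filter

noncomputable def Z (β : ℝ) (φ : ℝ → ℝ) (t : ℝ) : ℝ :=
  ∫ τ in Set.Iic t, Real.exp (-β * (t - τ)) * φ τ

lemma exp_mul_integrableOn (β t : ℝ) (hβ : 0 < β) :
    IntegrableOn (fun τ => Real.exp (β * τ)) (Set.Iic t) := by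
  have h1 : Integrable ((Set.Iic (β * t)).indicator Real.exp) := by
    rw [integrable_indicator_iff measurableSet_Iic]
    exact integrableOn_exp_Iic (β * t)
  have h2 := (integrable_comp_mul_left_iff ((Set.Iic (β * t)).indicator Real.exp)
    (ne_of_gt hβ)).2 h1
  have heq : (fun x => ((Set.Iic (β * t)).indicator Real.exp) (β * x))
      = (Set.Iic t).indicator (fun τ => Real.exp (β * τ)) := by
    funext x
    by_cases hx : x ≤ t
    · rw [Set.indicator_of_mem (by simpa using (mul_le_mul_iff_right₀ hβ).2 hx),
        Set.indicator_of_mem (by simpa using hx)]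
    · rw [Set.indicator_of_notMem, Set.indicator_of_notMem (by simpa using hx)]
      simp only [Set.mem_Iic, not_le] at hx ⊢
      exact (mul_lt_mul_iff_right₀ hβ).2 hx
  rw [heq] at h2
  rwa [← integrable_indicator_iff measurableSet_Iic]

lemma g_integrableOn (φ : ℝ → ℝ) (hφc : Continuous φ) {C : ℝ} (hC : ∀ t, |φ t| ≤ C)
    (β t : ℝ) (hβ : 0 < β) :
    IntegrableOn (fun τ => Real.exp (β * τ) * φ τ) (Set.Iic t) := by
  refine Integrable.mono' ((exp_mul_integrableOn β t hβ).const_mul C)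
    (((Real.continuous_exp.comp (continuous_const.mul continuous_id)).mul
      hφc).aestronglyMeasurable.restrict) ?_
  filter_upwards with x
  rw [norm_mul, Real.norm_eq_abs, Real.abs_exp, Real.norm_eq_abs, mul_comm C]
  exact mul_le_mul_of_nonneg_left (hC x) (Real.exp_pos _).le

theorem stmt1 (φ : ℝ → ℝ) (hφc : Continuous φ) (hφb : ∃ C, ∀ t, |φ t| ≤ C)
    (β : ℝ) (hβ : 0 < β) :
    ∀ t, HasDerivAt (Z β φ) (-β * Z β φ t + φ t) t := by
  obtain ⟨C, hC⟩ := hφb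
  set g : ℝ → ℝ := fun τ => Real.exp (β * τ) * φ τ with hg
  have hgc : Continuous g :=
    (Real.continuous_exp.comp (continuous_const.mul continuous_id)).mul hφc
  have hgi : ∀ s, IntegrableOn g (Set.Iic s) := fun s => g_integrableOn φ hφc hC β s hβ
  set F : ℝ → ℝ := fun s => ∫ τ in Set.Iic s, g τ with hF
  have hZF : ∀ s, Z β φ s = Real.exp (-β * s) * F s := by
    intro s
    rw [Z, hF, ← integral_const_mul]
    refine setIntegral_congr_fun measurableSet_Iic fun τ _ => ?_
    simp only [g]
    rw [← mul_assoc, ← Real.exp_add]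
    ring_nf
  intro t
  -- derivative of F at t is g t
  have hFder : HasDerivAt F (g t) t := by
    have hrepr : ∀ s, F s = F 0 + ∫ τ in (0:ℝ)..s, g τ := by
      intro s
      rw [hF]
      have := intervalIntegral.integral_Iic_sub_Iic (μ := volume) (f := g) (hgi 0) (hgi s)
      simp only at this ⊢
      linarith [this]
    have hiv : IntervalIntegrable g volume 0 t :=
      hgc.intervalIntegrable 0 t
    have h1 : HasDerivAt (fun s => ∫ τ in (0:ℝ)..s, g τ) (g t) t :=
      intervalIntegral.integral_hasDerivAt_right hiv
        (hgc.aestronglyMeasurable.stronglyMeasurableAtFilter) hgc.continuousAt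
    have h2 := h1.const_add (F 0)
    have : F = fun s => F 0 + ∫ τ in (0:ℝ)..s, g τ := funext hrepr
    rw [this]
    exact h2
  have hexp : HasDerivAt (fun s => Real.exp (-β * s)) (-β * Real.exp (-β * t)) t := by
    have h := ((hasDerivAt_id t).const_mul (-β)).exp
    simpa [mul_comm, mul_assoc, mul_left_comm] using h
  have hmul := hexp.mul hFder
  have hfun : (fun s => Real.exp (-β * s) * F s) = Z β φ := funext fun s => (hZF s).symm
  rw [show (fun s => Real.exp (-β * s)) * F = fun s => Real.exp (-β * s) * F s from rfl, hfun] at hmul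
  refine hmul.congr_deriv ?_
  rw [hZF t]
  have : Real.exp (-β * t) * g t = φ t := by
    simp only [g]
    rw [← mul_assoc, ← Real.exp_add]
    ring_nf
    simp
  ring_nf
  ring_nf at this
  linarith [this]
end

section
/- Let β_κ, β_λ > 0, ω ≠ 0, φ_μ(t) = cos(ω t), φ_ρ(t) = cos(ω t + ϕ). Then the long-time average of φ_ρ · Z_{β_λ}(Z_{β_κ} φ_μ) equals ((β_κ β_λ − ω²) cos ϕ − ω(β_κ + β_λ) sin ϕ) / (2(β_κ² + ω²)(β_λ² + ω²)). -/
open MeasureTheory Real Filter Set intervalIntegral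
open scoped Topology

lemma integrableOn_exp_mul_Iic' {β : ℝ} (hβ : 0 < β) (t : ℝ) :
    IntegrableOn (fun x => Real.exp (β * x)) (Set.Iic t) := by
  have hβ' : β ≠ 0 := ne_of_gt hβ
  refine integrableOn_Iic_of_intervalIntegral_norm_bounded (Real.exp (β*t)/β) t
    (fun y => (Real.continuous_exp.comp (continuous_const.mul continuous_id)).integrableOn_Ioc)
    tendsto_id ?_
  filter_upwards [eventually_le_atBot t] with y hy
  simp only [Real.norm_eq_abs, Real.abs_exp]
  rw [integral_comp_mul_left Real.exp hβ', integral_exp,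
    smul_eq_mul]
  have h1 := Real.exp_pos (β*y)
  have h2 := inv_pos.mpr hβ
  rw [div_eq_inv_mul]
  simp only [id_eq]
  nlinarith

/-- Key improper integral. -/
lemma key_integral {β : ℝ} (hβ : 0 < β) (ω a b t : ℝ) :
    (∫ τ in Set.Iic t, Real.exp (-β * (t - τ)) * (a * Real.cos (ω * τ) + b * Real.sin (ω * τ)))
      = ((a*β - b*ω) * Real.cos (ω*t) + (a*ω + b*β) * Real.sin (ω*t)) / (β^2 + ω^2) := by
  have hD : (0:ℝ) < β^2 + ω^2 := by positivity
  set A := a*β - b*ω with hA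
  set B := a*ω + b*β with hB
  set F : ℝ → ℝ := fun τ => Real.exp (-β * (t - τ)) *
      ((A * Real.cos (ω*τ) + B * Real.sin (ω*τ)) / (β^2 + ω^2)) with hF
  have hderiv : ∀ τ : ℝ, HasDerivAt F
      (Real.exp (-β * (t - τ)) * (a * Real.cos (ω * τ) + b * Real.sin (ω * τ))) τ := by
    intro τ
    have h1 : HasDerivAt (fun τ : ℝ => Real.exp (-β * (t - τ)))
        (β * Real.exp (-β * (t - τ))) τ := by
      have h0 : HasDerivAt (fun τ : ℝ => -β * (t - τ)) β τ := by
        simpa using ((hasDerivAt_id τ).const_sub t).const_mul (-β)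
      simpa [mul_comm] using h0.exp
    have hmul : HasDerivAt (fun y : ℝ => ω * y) ω τ := by
      simpa using (hasDerivAt_id τ).const_mul ω
    have hc : HasDerivAt (fun τ : ℝ => Real.cos (ω*τ)) (-Real.sin (ω*τ) * ω) τ :=
      (Real.hasDerivAt_cos (ω*τ)).comp τ hmul
    have hs : HasDerivAt (fun τ : ℝ => Real.sin (ω*τ)) (Real.cos (ω*τ) * ω) τ :=
      (Real.hasDerivAt_sin (ω*τ)).comp τ hmul
    have h2 := (((hc.const_mul A).add (hs.const_mul B)).div_const (β^2 + ω^2))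
    have h3 := h1.mul h2
    refine h3.congr_deriv ?_
    field_simp
    simp only [Pi.add_apply, hA, hB]
    ring
  have hint : IntegrableOn (fun τ =>
      Real.exp (-β * (t - τ)) * (a * Real.cos (ω * τ) + b * Real.sin (ω * τ))) (Set.Iic t) := by
    have hg : IntegrableOn (fun τ => (|a| + |b|) * (Real.exp (-β*t) * Real.exp (β * τ)))
        (Set.Iic t) := (((integrableOn_exp_mul_Iic' hβ t).const_mul _).const_mul _)
    refine Integrable.mono' hg ?_ (Eventually.of_forall fun τ => ?_)
    · exact (Continuous.aestronglyMeasurable (by continuity)).restrict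
    · rw [Real.norm_eq_abs, abs_mul]
      have h1 : |Real.exp (-β * (t - τ))| = Real.exp (-β*t) * Real.exp (β*τ) := by
        rw [Real.abs_exp, ← Real.exp_add]; ring_nf
      have h2 : |a * Real.cos (ω * τ) + b * Real.sin (ω * τ)| ≤ |a| + |b| := by
        refine (abs_add_le _ _).trans ?_
        rw [abs_mul, abs_mul]
        calc |a| * |Real.cos (ω*τ)| + |b| * |Real.sin (ω*τ)|
            ≤ |a| * 1 + |b| * 1 := by
              gcongr
              · exact Real.abs_cos_le_one _
              · exact Real.abs_sin_le_one _
          _ = |a| + |b| := by ring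
      rw [h1]
      have hp1 := (Real.exp_pos (-β*t)).le
      have hp2 := (Real.exp_pos (β*τ)).le
      calc Real.exp (-β*t) * Real.exp (β*τ) * |a * Real.cos (ω * τ) + b * Real.sin (ω * τ)|
          ≤ Real.exp (-β*t) * Real.exp (β*τ) * (|a| + |b|) := by
            apply mul_le_mul_of_nonneg_left h2 (by positivity)
        _ = (|a| + |b|) * (Real.exp (-β*t) * Real.exp (β * τ)) := by ring
  have hbot : Tendsto F atBot (𝓝 0) := by
    apply squeeze_zero_norm (a := fun τ => (Real.exp (-β*t) * ((|A|+|B|)/(β^2+ω^2))) *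
      Real.exp (β * τ))
    · intro τ
      rw [hF, Real.norm_eq_abs, abs_mul]
      have h1 : |Real.exp (-β * (t - τ))| = Real.exp (-β*t) * Real.exp (β*τ) := by
        rw [Real.abs_exp, ← Real.exp_add]; ring_nf
      have h2 : |(A * Real.cos (ω*τ) + B * Real.sin (ω*τ)) / (β^2 + ω^2)|
          ≤ (|A|+|B|)/(β^2+ω^2) := by
        rw [abs_div, abs_of_pos hD]
        gcongr
        refine (abs_add_le _ _).trans ?_
        rw [abs_mul, abs_mul]
        calc |A| * |Real.cos (ω*τ)| + |B| * |Real.sin (ω*τ)|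
            ≤ |A| * 1 + |B| * 1 := by
              gcongr
              · exact Real.abs_cos_le_one _
              · exact Real.abs_sin_le_one _
          _ = |A| + |B| := by ring
      rw [h1]
      calc Real.exp (-β*t) * Real.exp (β*τ)
            * |(A * Real.cos (ω*τ) + B * Real.sin (ω*τ)) / (β^2 + ω^2)|
          ≤ Real.exp (-β*t) * Real.exp (β*τ) * ((|A|+|B|)/(β^2+ω^2)) := by
            apply mul_le_mul_of_nonneg_left h2 (by positivity)
        _ = (Real.exp (-β*t) * ((|A|+|B|)/(β^2+ω^2))) * Real.exp (β * τ) := by ring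
    · have h3 : Tendsto (fun τ : ℝ => β * τ) atBot atBot :=
        (tendsto_const_mul_atBot_of_pos hβ).mpr tendsto_id
      have h4 : Tendsto (fun τ : ℝ => Real.exp (β * τ)) atBot (𝓝 0) :=
        Real.tendsto_exp_atBot.comp h3
      simpa using h4.const_mul (Real.exp (-β*t) * ((|A|+|B|)/(β^2+ω^2)))
  have hmain := integral_Iic_of_hasDerivAt_of_tendsto' (a := t) (f := F)
    (fun x _ => hderiv x) hint hbot
  rw [hmain, hF]
  simp

lemma trig_id (x ϕ p q : ℝ) :
    Real.cos (x + ϕ) * (p * Real.cos x + q * Real.sin x)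
      = (p * Real.cos ϕ - q * Real.sin ϕ)/2
        + (p * Real.cos (2*x+ϕ) + q * Real.sin (2*x+ϕ))/2 := by
  have h2 : 2*x+ϕ = x + (x+ϕ) := by ring
  rw [h2, Real.cos_add x (x+ϕ), Real.sin_add x (x+ϕ), Real.cos_add x ϕ, Real.sin_add x ϕ]
  linear_combination ((p * Real.cos ϕ - q * Real.sin ϕ)/2) * (Real.sin_sq_add_cos_sq x)

lemma avg_limit {ω : ℝ} (hω : ω ≠ 0) (ϕ p q : ℝ) :
    Tendsto (fun T : ℝ => (1 / T) * ∫ t in (0:ℝ)..T,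
        Real.cos (ω * t + ϕ) * (p * Real.cos (ω*t) + q * Real.sin (ω*t)))
      atTop (𝓝 ((p * Real.cos ϕ - q * Real.sin ϕ)/2)) := by
  set L := (p * Real.cos ϕ - q * Real.sin ϕ)/2 with hL
  set F : ℝ → ℝ := fun t => L * t + (p * Real.sin (2*ω*t+ϕ) - q * Real.cos (2*ω*t+ϕ))/(4*ω)
    with hF
  have hderiv : ∀ t : ℝ, HasDerivAt F
      (Real.cos (ω * t + ϕ) * (p * Real.cos (ω*t) + q * Real.sin (ω*t))) t := by
    intro t
    have harg : HasDerivAt (fun t : ℝ => 2*ω*t+ϕ) (2*ω) t := by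
      simpa using ((hasDerivAt_id t).const_mul (2*ω)).add_const ϕ
    have hs : HasDerivAt (fun t : ℝ => Real.sin (2*ω*t+ϕ)) (Real.cos (2*ω*t+ϕ) * (2*ω)) t :=
      (Real.hasDerivAt_sin _).comp t harg
    have hc : HasDerivAt (fun t : ℝ => Real.cos (2*ω*t+ϕ)) (-Real.sin (2*ω*t+ϕ) * (2*ω)) t :=
      (Real.hasDerivAt_cos _).comp t harg
    have h5 := ((hasDerivAt_id t).const_mul L).add
      (((hs.const_mul p).sub (hc.const_mul q)).div_const (4*ω))
    refine h5.congr_deriv ?_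
    rw [show ω * t + ϕ = (ω*t) + ϕ from rfl, trig_id (ω*t) ϕ p q]
    have h2 : 2*(ω*t)+ϕ = 2*ω*t+ϕ := by ring
    rw [h2, hL]
    field_simp
    ring
  have hint : ∀ T : ℝ, (∫ t in (0:ℝ)..T,
      Real.cos (ω * t + ϕ) * (p * Real.cos (ω*t) + q * Real.sin (ω*t))) = F T - F 0 := by
    intro T
    exact integral_eq_sub_of_hasDerivAt (fun t _ => hderiv t)
      ((Continuous.intervalIntegrable (by continuity) _ _))
  have hEq : ∀ᶠ T in atTop, L + (F T - F 0 - L * T) / T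
      = (1 / T) * ∫ t in (0:ℝ)..T,
        Real.cos (ω * t + ϕ) * (p * Real.cos (ω*t) + q * Real.sin (ω*t)) := by
    filter_upwards [eventually_gt_atTop 0] with T hT
    rw [hint T]
    field_simp
    ring
  have hbound : ∀ᶠ T in atTop, ‖(F T - F 0 - L * T) / T‖
      ≤ ((2*|p| + 2*|q|)/(4*|ω|)) * (1/T) := by
    filter_upwards [eventually_gt_atTop 0] with T hT
    have h1 : |F T - F 0 - L * T| ≤ (2*|p| + 2*|q|)/(4*|ω|) := by
      have he : F T - F 0 - L * T = (p * Real.sin (2*ω*T+ϕ) - q * Real.cos (2*ω*T+ϕ)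
          - (p * Real.sin (2*ω*0+ϕ) - q * Real.cos (2*ω*0+ϕ)))/(4*ω) := by
        rw [hF]; ring
      rw [he, abs_div, abs_mul, show |(4:ℝ)| = 4 by norm_num]
      gcongr
      calc |p * Real.sin (2*ω*T+ϕ) - q * Real.cos (2*ω*T+ϕ)
          - (p * Real.sin (2*ω*0+ϕ) - q * Real.cos (2*ω*0+ϕ))|
          ≤ (|p * Real.sin (2*ω*T+ϕ)| + |q * Real.cos (2*ω*T+ϕ)|)
            + (|p * Real.sin (2*ω*0+ϕ)| + |q * Real.cos (2*ω*0+ϕ)|) := by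
            refine (abs_sub _ _).trans ?_
            gcongr <;> exact abs_sub _ _
        _ ≤ (|p| * 1 + |q| * 1) + (|p| * 1 + |q| * 1) := by
            gcongr <;> rw [abs_mul]
            · exact mul_le_mul_of_nonneg_left (Real.abs_sin_le_one _) (abs_nonneg _)
            · exact mul_le_mul_of_nonneg_left (Real.abs_cos_le_one _) (abs_nonneg _)
            · exact mul_le_mul_of_nonneg_left (Real.abs_sin_le_one _) (abs_nonneg _)
            · exact mul_le_mul_of_nonneg_left (Real.abs_cos_le_one _) (abs_nonneg _)
        _ = 2*|p| + 2*|q| := by ring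
    rw [Real.norm_eq_abs, abs_div, abs_of_pos hT, div_eq_mul_one_div]
    gcongr
  have hz : Tendsto (fun T : ℝ => (F T - F 0 - L * T) / T) atTop (𝓝 0) := by
    refine squeeze_zero_norm' hbound ?_
    simpa [one_div] using tendsto_inv_atTop_zero.const_mul ((2*|p| + 2*|q|)/(4*|ω|))
  simpa using Tendsto.congr' hEq (tendsto_const_nhds.add hz)

theorem stmt8 (bk bl ω ϕ : ℝ) (hbk : 0 < bk) (hbl : 0 < bl) (hω : ω ≠ 0) :
    Tendsto (fun T : ℝ =>
        (1 / T) * ∫ t in (0:ℝ)..T,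
          Real.cos (ω * t + ϕ) * Z bl (Z bk (fun s => Real.cos (ω * s))) t)
      atTop
      (nhds (((bk * bl - ω ^ 2) * Real.cos ϕ - ω * (bk + bl) * Real.sin ϕ)
        / (2 * (bk ^ 2 + ω ^ 2) * (bl ^ 2 + ω ^ 2)))) := by
  have hDk : (0:ℝ) < bk^2 + ω^2 := by positivity
  have hDl : (0:ℝ) < bl^2 + ω^2 := by positivity
  set p : ℝ := (bk*bl - ω^2)/((bk^2+ω^2)*(bl^2+ω^2)) with hp
  set q : ℝ := ω*(bk+bl)/((bk^2+ω^2)*(bl^2+ω^2)) with hq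
  have h1 : ∀ t : ℝ, Z bk (fun s => Real.cos (ω*s)) t
      = (bk/(bk^2+ω^2)) * Real.cos (ω*t) + (ω/(bk^2+ω^2)) * Real.sin (ω*t) := by
    intro t
    unfold Z
    rw [show (∫ τ in Set.Iic t, Real.exp (-bk * (t - τ)) * Real.cos (ω * τ))
        = ∫ τ in Set.Iic t, Real.exp (-bk * (t - τ))
          * (1 * Real.cos (ω * τ) + 0 * Real.sin (ω * τ)) by simp,
      key_integral hbk]
    ring
  have h2 : ∀ t : ℝ, Z bl (Z bk (fun s => Real.cos (ω*s))) t
      = p * Real.cos (ω*t) + q * Real.sin (ω*t) := by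
    intro t
    show (∫ τ in Set.Iic t, Real.exp (-bl * (t - τ)) * Z bk (fun s => Real.cos (ω*s)) τ) = _
    rw [show (fun τ => Real.exp (-bl * (t - τ)) * Z bk (fun s => Real.cos (ω*s)) τ)
        = fun τ => Real.exp (-bl * (t - τ)) * ((bk/(bk^2+ω^2)) * Real.cos (ω*τ)
          + (ω/(bk^2+ω^2)) * Real.sin (ω*τ)) from funext fun τ => by rw [h1 τ],
      key_integral hbl, hp, hq]
    field_simp
  have hg : (fun x : ℝ => Real.cos (ω * x + ϕ) * Z bl (Z bk fun s => Real.cos (ω * s)) x)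
      = fun x : ℝ => Real.cos (ω * x + ϕ) * (p * Real.cos (ω*x) + q * Real.sin (ω*x)) :=
    funext fun x => by rw [h2 x]
  have hfun : (fun T : ℝ => (1 / T) * ∫ t in (0:ℝ)..T,
        Real.cos (ω * t + ϕ) * Z bl (Z bk (fun s => Real.cos (ω * s))) t)
      = fun T : ℝ => (1 / T) * ∫ t in (0:ℝ)..T,
        Real.cos (ω * t + ϕ) * (p * Real.cos (ω*t) + q * Real.sin (ω*t)) := by
    funext T
    rw [show (∫ t in (0:ℝ)..T, Real.cos (ω * t + ϕ) * Z bl (Z bk (fun s => Real.cos (ω * s))) t)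
      = ∫ t in (0:ℝ)..T, Real.cos (ω * t + ϕ) * (p * Real.cos (ω*t) + q * Real.sin (ω*t)) from by
        rw [intervalIntegral]; rw [hg]; rfl]
  rw [hfun, show ((bk * bl - ω ^ 2) * Real.cos ϕ - ω * (bk + bl) * Real.sin ϕ)
      / (2 * (bk ^ 2 + ω ^ 2) * (bl ^ 2 + ω ^ 2))
      = (p * Real.cos ϕ - q * Real.sin ϕ)/2 by
        rw [hp, hq, div_mul_eq_mul_div, div_mul_eq_mul_div, ← sub_div, div_div]; ring_nf]
  exact avg_limit hω ϕ p q
end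

section
/- For the linear diffusion equation u_t = u_xx on the element [−H, H] with boundary conditions u(−H,t) = u(0,t) = u(H,t), every solution expressible as a finite linear combination of the modes {1, sin(kθ) (k ≥ 1), cos(kθ) (even k ≥ 2), θ sin(kθ) (even k ≥ 2)} (θ = πx/H) converges, as t → ∞, to its constant component at exponential rate at least β₁ = π²/H²: writing u(x,t) = U + w(x,t) with U the coefficient of the constant mode, one has sup_x |w(x,t)| ≤ C(1 + t) e^{−π² t/H²}. -/
open Real

private lemma hd_sin (b x : ℝ) :
    HasDerivAt (fun y => Real.sin (b * y)) (b * Real.cos (b * x)) x := by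
  have h1 : HasDerivAt (fun y : ℝ => b * y) b x := by
    simpa using (hasDerivAt_id x).const_mul b
  simpa [Function.comp_def, mul_comm] using (Real.hasDerivAt_sin (b * x)).comp x h1

private lemma hd_cos (b x : ℝ) :
    HasDerivAt (fun y => Real.cos (b * y)) (-(b * Real.sin (b * x))) x := by
  have h1 : HasDerivAt (fun y : ℝ => b * y) b x := by
    simpa using (hasDerivAt_id x).const_mul b
  have := (Real.hasDerivAt_cos (b * x)).comp x h1
  simpa [Function.comp_def, mul_comm] using this

private lemma dd_sin (b x : ℝ) :
    deriv (deriv (fun y => Real.sin (b * y))) x = -(b ^ 2) * Real.sin (b * x) := by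
  have h : deriv (fun y => Real.sin (b * y)) = fun y => b * Real.cos (b * y) :=
    funext fun y => (hd_sin b y).deriv
  rw [h]
  have h2 : HasDerivAt (fun y => b * Real.cos (b * y)) (b * -(b * Real.sin (b * x))) x :=
    (hd_cos b x).const_mul b
  rw [h2.deriv]; ring

private lemma dd_cos (b x : ℝ) :
    deriv (deriv (fun y => Real.cos (b * y))) x = -(b ^ 2) * Real.cos (b * x) := by
  have h : deriv (fun y => Real.cos (b * y)) = fun y => -(b * Real.sin (b * y)) :=
    funext fun y => (hd_cos b y).deriv
  rw [h]
  have h2 : HasDerivAt (fun y => -(b * Real.sin (b * y))) (-(b * (b * Real.cos (b * x)))) x := by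
    simpa using ((hd_sin b x).const_mul b).fun_neg
  rw [h2.deriv]; ring

private lemma hd_p (e b x : ℝ) :
    HasDerivAt (fun y => e * y * Real.sin (b * y))
      (e * Real.sin (b * x) + e * x * (b * Real.cos (b * x))) x := by
  have h1 : HasDerivAt (fun y : ℝ => e * y) e x := by
    simpa using (hasDerivAt_id x).const_mul e
  simpa using h1.fun_mul (hd_sin b x)

private lemma dd_p (e b x : ℝ) :
    deriv (deriv (fun y => e * y * Real.sin (b * y))) x =
      2 * e * b * Real.cos (b * x) + -(b ^ 2) * (e * x * Real.sin (b * x)) := by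
  have h : deriv (fun y => e * y * Real.sin (b * y)) =
      fun y => e * Real.sin (b * y) + e * y * (b * Real.cos (b * y)) :=
    funext fun y => (hd_p e b y).deriv
  rw [h]
  have h1 : HasDerivAt (fun y : ℝ => e * y) e x := by
    simpa using (hasDerivAt_id x).const_mul e
  have ha := (hd_sin b x).const_mul e
  have hb := h1.fun_mul ((hd_cos b x).const_mul b)
  rw [(ha.fun_add hb).deriv]; ring

private lemma exp_decay_le (H b t : ℝ) (hb2 : Real.pi^2/H^2 ≤ b^2) (ht : 0 ≤ t) :
    Real.exp (-(b^2)*t) ≤ Real.exp (-Real.pi^2 * t/H^2) := by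
  apply Real.exp_le_exp.2
  rw [show -Real.pi^2 * t/H^2 = -(Real.pi^2/H^2)*t by ring]
  nlinarith [mul_nonneg (sub_nonneg.2 hb2) ht]

private lemma sq_mode_ge (H : ℝ) (k : ℕ) (hk1 : (1:ℝ) ≤ (k:ℝ)) :
    Real.pi^2/H^2 ≤ ((k:ℝ)*Real.pi/H)^2 := by
  have h1 : ((k:ℝ)*Real.pi/H)^2 - Real.pi^2/H^2 = ((k:ℝ)^2 - 1) * (Real.pi/H)^2 := by ring
  nlinarith [sq_nonneg (Real.pi/H), sq_nonneg ((k:ℝ)-1), hk1]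

private lemma one_le_prefac (H t : ℝ) (N : ℕ) (hH : 0 < H) (ht : 0 ≤ t) :
    1 ≤ (Real.pi + 2*N*Real.pi^2/H^2) * (1+t) := by
  have hπ1 : (1:ℝ) ≤ Real.pi := by linarith [Real.pi_gt_three]
  have hnn : (0:ℝ) ≤ 2*N*Real.pi^2/H^2 := by positivity
  nlinarith [mul_nonneg (by positivity : (0:ℝ) ≤ Real.pi) ht, mul_nonneg hnn ht]

private lemma hasDerivAt_expdecay (b t : ℝ) :
    HasDerivAt (fun s : ℝ => Real.exp (-(b^2)*s)) (Real.exp (-(b^2)*t) * (-(b^2))) t := by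
  simpa using ((hasDerivAt_id t).const_mul (-(b^2))).exp


set_option maxHeartbeats 3000000 in
theorem stmt15 (H : ℝ) (hH : 0 < H) (N : ℕ) (U : ℝ) (u : ℝ → ℝ → ℝ)
    (heq : ∀ x t : ℝ, HasDerivAt (fun s => u x s)
      (deriv (deriv (fun y => u y t)) x) t)
    (hbc : ∀ t : ℝ, u (-H) t = u 0 t ∧ u H t = u 0 t)
    (hspan : ∀ t : ℝ, (fun x => u x t - U) ∈ Submodule.span ℝ
      {f : ℝ → ℝ | ∃ k : ℕ, 1 ≤ k ∧ k ≤ N ∧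
        ((f = fun x => Real.sin ((k : ℝ) * Real.pi * x / H)) ∨
         (Even k ∧ f = fun x => Real.cos ((k : ℝ) * Real.pi * x / H)) ∨
         (Even k ∧ f = fun x => (Real.pi * x / H) * Real.sin ((k : ℝ) * Real.pi * x / H)))}) :
    ∃ C : ℝ, ∀ t ≥ (0:ℝ), ∀ x ∈ Set.Icc (-H) H,
      |u x t - U| ≤ C * (1 + t) * Real.exp (-Real.pi ^ 2 * t / H ^ 2) := by
  clear hbc
  set S : Set (ℝ → ℝ) := {f : ℝ → ℝ | ∃ k : ℕ, 1 ≤ k ∧ k ≤ N ∧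
        ((f = fun x => Real.sin ((k : ℝ) * Real.pi * x / H)) ∨
         (Even k ∧ f = fun x => Real.cos ((k : ℝ) * Real.pi * x / H)) ∨
         (Even k ∧ f = fun x => (Real.pi * x / H) * Real.sin ((k : ℝ) * Real.pi * x / H)))}
    with hSdef
  set V : Submodule ℝ (ℝ → ℝ) := Submodule.span ℝ S with hVdef
  -- finiteness of S
  have hSfin : S.Finite := by
    have hsub : S ⊆ ((fun k : ℕ => fun x => Real.sin ((k : ℝ) * Real.pi * x / H)) '' Set.Iic N)
        ∪ ((fun k : ℕ => fun x => Real.cos ((k : ℝ) * Real.pi * x / H)) '' Set.Iic N)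
        ∪ ((fun k : ℕ => fun x => (Real.pi * x / H) * Real.sin ((k : ℝ) * Real.pi * x / H)) ''
            Set.Iic N) := by
      rintro f ⟨k, hk1, hk2, hf | ⟨hke, hf⟩ | ⟨hke, hf⟩⟩
      · exact Or.inl (Or.inl ⟨k, hk2, hf.symm⟩)
      · exact Or.inl (Or.inr ⟨k, hk2, hf.symm⟩)
      · exact Or.inr ⟨k, hk2, hf.symm⟩
    exact Set.Finite.subset ((((Set.finite_Iic N).image _).union
      ((Set.finite_Iic N).image _)).union ((Set.finite_Iic N).image _)) hsub
  haveI : FiniteDimensional ℝ V := FiniteDimensional.span_of_finite ℝ hSfin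
  -- every element of the span is twice differentiable with second derivative in the span
  have hQ : ∀ f ∈ V, Differentiable ℝ f ∧ Differentiable ℝ (deriv f) ∧ deriv (deriv f) ∈ V := by
    intro f hf
    induction hf using Submodule.span_induction with
    | mem f hfS =>
      obtain ⟨k, hk1, hk2, hf | ⟨hke, hf⟩ | ⟨hke, hf⟩⟩ := hfS
      · have hfeq : f = fun x => Real.sin (((k : ℝ) * Real.pi / H) * x) := by
          rw [hf]; funext x; congr 1; ring
        subst hfeq
        refine ⟨fun x => (hd_sin _ x).differentiableAt, ?_, ?_⟩
        · rw [funext fun y => (hd_sin ((k : ℝ) * Real.pi / H) y).deriv]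
          exact fun x => ((hd_cos _ x).const_mul _).differentiableAt
        · have : deriv (deriv (fun y => Real.sin (((k : ℝ) * Real.pi / H) * y))) =
              (-(((k : ℝ) * Real.pi / H) ^ 2)) •
                (fun y => Real.sin (((k : ℝ) * Real.pi / H) * y)) := by
            funext x
            simpa [Pi.smul_apply, smul_eq_mul] using dd_sin ((k : ℝ) * Real.pi / H) x
          rw [this]
          exact Submodule.smul_mem _ _ (Submodule.subset_span
            (by rw [hf]; exact ⟨k, hk1, hk2, Or.inl rfl⟩))
      · have hfeq : f = fun x => Real.cos (((k : ℝ) * Real.pi / H) * x) := by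
          rw [hf]; funext x; congr 1; ring
        subst hfeq
        refine ⟨fun x => (hd_cos _ x).differentiableAt, ?_, ?_⟩
        · rw [funext fun y => (hd_cos ((k : ℝ) * Real.pi / H) y).deriv]
          exact fun x => (((hd_sin _ x).const_mul _).neg).differentiableAt
        · have hdd : deriv (deriv (fun y => Real.cos (((k : ℝ) * Real.pi / H) * y))) =
              (-(((k : ℝ) * Real.pi / H) ^ 2)) •
                (fun y => Real.cos (((k : ℝ) * Real.pi / H) * y)) := by
            funext x
            simpa [Pi.smul_apply, smul_eq_mul] using dd_cos ((k : ℝ) * Real.pi / H) x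
          rw [hdd]
          refine Submodule.smul_mem _ _ (Submodule.subset_span ?_)
          exact ⟨k, hk1, hk2, Or.inr (Or.inl ⟨hke, by funext x; congr 1; ring⟩)⟩
      · have hfeq : f = fun x => (Real.pi / H) * x * Real.sin (((k : ℝ) * Real.pi / H) * x) := by
          rw [hf]; funext x
          rw [show (k : ℝ) * Real.pi * x / H = ((k : ℝ) * Real.pi / H) * x by ring]
          ring
        subst hfeq
        refine ⟨fun x => (hd_p _ _ x).differentiableAt, ?_, ?_⟩
        · rw [funext fun y => (hd_p (Real.pi / H) ((k : ℝ) * Real.pi / H) y).deriv]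
          intro x
          have h1 : HasDerivAt (fun y : ℝ => Real.pi / H * y) (Real.pi / H) x := by
            simpa using (hasDerivAt_id x).const_mul (Real.pi / H)
          exact (((hd_sin _ x).const_mul (Real.pi / H)).add
            (h1.mul ((hd_cos _ x).const_mul _))).differentiableAt
        · have hdd : deriv (deriv (fun y => Real.pi / H * y *
              Real.sin (((k : ℝ) * Real.pi / H) * y))) =
              (2 * (Real.pi / H) * ((k : ℝ) * Real.pi / H)) •
                (fun y => Real.cos (((k : ℝ) * Real.pi / H) * y)) +
              (-(((k : ℝ) * Real.pi / H) ^ 2)) •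
                (fun y => Real.pi / H * y * Real.sin (((k : ℝ) * Real.pi / H) * y)) := by
            funext x
            simpa [Pi.add_apply, Pi.smul_apply, smul_eq_mul] using
              dd_p (Real.pi / H) ((k : ℝ) * Real.pi / H) x
          rw [hdd]
          refine Submodule.add_mem _
            (Submodule.smul_mem _ _ (Submodule.subset_span ?_))
            (Submodule.smul_mem _ _ (Submodule.subset_span ?_))
          · exact ⟨k, hk1, hk2, Or.inr (Or.inl ⟨hke, by funext x; congr 1; ring⟩)⟩
          · refine ⟨k, hk1, hk2, Or.inr (Or.inr ⟨hke, ?_⟩)⟩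
            funext x
            rw [show (k : ℝ) * Real.pi * x / H = ((k : ℝ) * Real.pi / H) * x by ring]
            ring
    | zero =>
      have h0 : deriv (0 : ℝ → ℝ) = 0 := by funext x; exact deriv_const x 0
      refine ⟨differentiable_const 0, ?_, ?_⟩
      · rw [h0]; exact differentiable_const 0
      · rw [h0, h0]; exact Submodule.zero_mem _
    | add f g hfV hgV hf hg =>
      obtain ⟨hf1, hf2, hf3⟩ := hf
      obtain ⟨hg1, hg2, hg3⟩ := hg
      have e1 : deriv (f + g) = deriv f + deriv g := by
        funext x
        show deriv (fun y => f y + g y) x = deriv f x + deriv g x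
        exact deriv_add (hf1 x) (hg1 x)
      refine ⟨hf1.add hg1, ?_, ?_⟩
      · rw [e1]; exact hf2.add hg2
      · rw [e1]
        have e2 : deriv (deriv f + deriv g) = deriv (deriv f) + deriv (deriv g) := by
          funext x
          show deriv (fun y => deriv f y + deriv g y) x = deriv (deriv f) x + deriv (deriv g) x
          exact deriv_add (hf2 x) (hg2 x)
        rw [e2]; exact Submodule.add_mem _ hf3 hg3
    | smul r f hfV hf =>
      obtain ⟨hf1, hf2, hf3⟩ := hf
      have e1 : deriv (r • f) = r • deriv f := by
        funext x
        show deriv (fun y => r • f y) x = r • deriv f x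
        exact deriv_const_smul r (hf1 x)
      refine ⟨hf1.const_smul r, ?_, ?_⟩
      · rw [e1]; exact hf2.const_smul r
      · rw [e1]
        have e2 : deriv (r • deriv f) = r • deriv (deriv f) := by
          funext x
          show deriv (fun y => r • deriv f y) x = r • deriv (deriv f) x
          exact deriv_const_smul r (hf2 x)
        rw [e2]; exact Submodule.smul_mem _ _ hf3
  -- the second derivative as a linear endomorphism of V
  obtain ⟨Alin, hA⟩ : ∃ A : V →ₗ[ℝ] V, ∀ f : V, (A f : ℝ → ℝ) = deriv (deriv (f : ℝ → ℝ)) := by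
    refine ⟨{ toFun := fun f => ⟨deriv (deriv (f : ℝ → ℝ)), (hQ _ f.2).2.2⟩,
              map_add' := ?_, map_smul' := ?_ }, fun f => rfl⟩
    · intro f g
      apply Subtype.ext
      obtain ⟨hf1, hf2, -⟩ := hQ _ f.2
      obtain ⟨hg1, hg2, -⟩ := hQ _ g.2
      have e1 : deriv ((f : ℝ → ℝ) + (g : ℝ → ℝ)) = deriv (f : ℝ → ℝ) + deriv (g : ℝ → ℝ) := by
        funext x
        show deriv (fun y => (f : ℝ → ℝ) y + (g : ℝ → ℝ) y) x = _
        exact deriv_add (hf1 x) (hg1 x)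
      have e2 : deriv (deriv (f : ℝ → ℝ) + deriv (g : ℝ → ℝ)) =
          deriv (deriv (f : ℝ → ℝ)) + deriv (deriv (g : ℝ → ℝ)) := by
        funext x
        show deriv (fun y => deriv (f : ℝ → ℝ) y + deriv (g : ℝ → ℝ) y) x = _
        exact deriv_add (hf2 x) (hg2 x)
      show deriv (deriv ((f : ℝ → ℝ) + (g : ℝ → ℝ))) = _
      rw [e1, e2]; rfl
    · intro r f
      apply Subtype.ext
      obtain ⟨hf1, hf2, -⟩ := hQ _ f.2
      have e1 : deriv (r • (f : ℝ → ℝ)) = r • deriv (f : ℝ → ℝ) := by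
        funext x
        show deriv (fun y => r • (f : ℝ → ℝ) y) x = _
        exact deriv_const_smul r (hf1 x)
      have e2 : deriv (r • deriv (f : ℝ → ℝ)) = r • deriv (deriv (f : ℝ → ℝ)) := by
        funext x
        show deriv (fun y => r • deriv (f : ℝ → ℝ) y) x = _
        exact deriv_const_smul r (hf2 x)
      show deriv (deriv (r • (f : ℝ → ℝ))) = _
      rw [e1, e2]; rfl
  -- evaluation functionals
  let evalL : ℝ → (V →ₗ[ℝ] ℝ) := fun x =>
    { toFun := fun f => (f : ℝ → ℝ) x, map_add' := fun f g => rfl, map_smul' := fun r f => rfl }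
  -- find finitely many points where evaluation is jointly injective
  haveI : IsArtinian ℝ V := inferInstance
  obtain ⟨W₀, hW₀mem, hW₀min⟩ := IsArtinian.set_has_minimal
    {W : Submodule ℝ V | ∃ s : Finset ℝ, W = s.inf fun x => LinearMap.ker (evalL x)}
    ⟨⊤, ∅, by simp⟩
  obtain ⟨s₀, rfl⟩ := hW₀mem
  have hbot : (s₀.inf fun x => LinearMap.ker (evalL x)) = ⊥ := by
    by_contra hne
    obtain ⟨f, hfW, hf0⟩ := Submodule.exists_mem_ne_zero_of_ne_bot hne
    have hfun : (f : ℝ → ℝ) ≠ 0 := fun h => hf0 (Subtype.ext h)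
    obtain ⟨x₀, hx₀⟩ := Function.ne_iff.1 hfun
    refine hW₀min _ ⟨insert x₀ s₀, rfl⟩ ?_
    rw [Finset.inf_insert]
    refine lt_of_le_of_ne inf_le_right fun hcontr => ?_
    have hf' : f ∈ LinearMap.ker (evalL x₀) ⊓ s₀.inf fun x => LinearMap.ker (evalL x) := by
      rw [hcontr]; exact hfW
    exact hx₀ (LinearMap.mem_ker.1 (Submodule.mem_inf.1 hf').1)
  -- the evaluation embedding into a finite-dimensional coordinate space
  let E : V →ₗ[ℝ] (↥s₀ → ℝ) := LinearMap.pi fun i : ↥s₀ => evalL (i : ℝ)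
  have hEinj : Function.Injective E := by
    rw [← LinearMap.ker_eq_bot, eq_bot_iff]
    intro f hf
    have hf2 : f ∈ s₀.inf fun x => LinearMap.ker (evalL x) := by
      rw [Submodule.mem_finsetInf]
      intro x hx
      have h3 := congrFun (LinearMap.mem_ker.1 hf) ⟨x, hx⟩
      exact h3
    rw [hbot] at hf2; exact hf2
  obtain ⟨P, hP⟩ := LinearMap.exists_leftInverse_of_injective E (LinearMap.ker_eq_bot.2 hEinj)
  let B : (↥s₀ → ℝ) →L[ℝ] (↥s₀ → ℝ) := LinearMap.toContinuousLinearMap (E ∘ₗ Alin ∘ₗ P)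
  have hBE : ∀ f : V, B (E f) = E (Alin f) := by
    intro f
    have h1 : P (E f) = f := LinearMap.congr_fun hP f
    show (E ∘ₗ Alin ∘ₗ P) (E f) = E (Alin f)
    rw [LinearMap.comp_apply, LinearMap.comp_apply, h1]
  -- the solution curve and its derivative
  have hπ1 : (1:ℝ) ≤ Real.pi := by linarith [Real.pi_gt_three]
  have hnn : (0:ℝ) ≤ 2*N*Real.pi^2/H^2 := by positivity
  have hc' : ∀ t : ℝ, HasDerivAt (fun s => E ⟨fun x => u x s - U, hspan s⟩)
      (E (Alin ⟨fun x => u x t - U, hspan t⟩)) t := by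
    intro t
    rw [hasDerivAt_pi]
    intro i
    have h3 : E (Alin ⟨fun x => u x t - U, hspan t⟩) i = deriv (deriv fun y => u y t) (i : ℝ) := by
      show ((Alin ⟨fun x => u x t - U, hspan t⟩ : ℝ → ℝ)) (i : ℝ) = _
      rw [hA]
      show deriv (deriv fun y => u y t - U) (i : ℝ) = _
      rw [show (deriv fun y => u y t - U) = deriv fun y => u y t from
        funext fun x => deriv_sub_const U]
    rw [h3]
    exact (heq (i : ℝ) t).sub_const U
  -- explicit decaying flows for each mode
  have mode_flow : ∀ f ∈ S, ∃ sol : ℝ → V,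
      ((sol 0 : ℝ → ℝ) = f) ∧
      (∀ t : ℝ, HasDerivAt (fun s => E (sol s)) (E (Alin (sol t))) t) ∧
      (∀ t : ℝ, 0 ≤ t → ∀ x ∈ Set.Icc (-H) H,
        |(sol t : ℝ → ℝ) x| ≤ (Real.pi + 2*N*Real.pi^2/H^2) * (1 + t) *
          Real.exp (-Real.pi^2 * t / H^2)) := by
    rintro f ⟨k, hk1, hk2, hcase⟩
    have hk1' : (1:ℝ) ≤ (k : ℝ) := by exact_mod_cast hk1
    have hkN : ((k : ℝ)) ≤ (N : ℝ) := by exact_mod_cast hk2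
    obtain ⟨b, hbdef⟩ : ∃ b : ℝ, b = (k : ℝ) * Real.pi / H := ⟨_, rfl⟩
    have hb2 : Real.pi^2/H^2 ≤ b^2 := hbdef ▸ sq_mode_ge H k hk1'
    have hbpos : 0 < b := by rw [hbdef]; positivity
    rcases hcase with hf | ⟨hke, hf⟩ | ⟨hke, hf⟩ <;> subst hf
    · -- sine mode
      have hfS : (fun x => Real.sin (b*x)) ∈ S :=
        ⟨k, hk1, hk2, Or.inl (by funext x; rw [hbdef]; congr 1; ring)⟩
      refine ⟨fun t => Real.exp (-(b^2)*t) • (⟨_, Submodule.subset_span hfS⟩ : V),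
        ?_, ?_, ?_⟩
      · show Real.exp (-(b^2)*0) • (fun x => Real.sin (b*x)) = _
        rw [show -(b^2)*(0:ℝ) = 0 by ring, Real.exp_zero, one_smul]
        funext x; rw [hbdef]; congr 1; ring
      · intro t
        have hAf : Alin ⟨_, Submodule.subset_span hfS⟩ =
            (-(b^2)) • (⟨_, Submodule.subset_span hfS⟩ : V) := by
          apply Subtype.ext
          rw [hA]
          funext x
          simpa [smul_eq_mul] using dd_sin b x
        have hES : ∀ s : ℝ, E (Real.exp (-(b^2)*s) • (⟨_, Submodule.subset_span hfS⟩ : V)) =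
            Real.exp (-(b^2)*s) • E ⟨_, Submodule.subset_span hfS⟩ := fun s => map_smul E _ _
        simp only [hES]
        have htot := (hasDerivAt_expdecay b t).smul_const (E ⟨_, Submodule.subset_span hfS⟩)
        refine htot.congr_deriv ?_
        simp only [hAf, map_smul, smul_smul]
      · intro t ht x hx
        have h1 : |(↑(Real.exp (-(b^2)*t) • (⟨_, Submodule.subset_span hfS⟩ : V)) : ℝ → ℝ) x|
            = Real.exp (-(b^2)*t) * |Real.sin (b*x)| := by
          show |Real.exp (-(b^2)*t) • Real.sin (b*x)| = _
          rw [smul_eq_mul, abs_mul, abs_of_pos (Real.exp_pos _)]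
        rw [h1]
        calc Real.exp (-(b^2)*t) * |Real.sin (b*x)|
            ≤ Real.exp (-(b^2)*t) * 1 :=
              mul_le_mul_of_nonneg_left (Real.abs_sin_le_one _) (Real.exp_pos _).le
          _ = Real.exp (-(b^2)*t) := mul_one _
          _ ≤ Real.exp (-Real.pi^2 * t/H^2) := exp_decay_le H b t hb2 ht
          _ ≤ (Real.pi + 2*N*Real.pi^2/H^2) * (1 + t) * Real.exp (-Real.pi^2 * t / H^2) :=
              le_mul_of_one_le_left (Real.exp_pos _).le (one_le_prefac H t N hH ht)
    · -- cosine mode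
      have hfS : (fun x => Real.cos (b*x)) ∈ S :=
        ⟨k, hk1, hk2, Or.inr (Or.inl ⟨hke, by funext x; rw [hbdef]; congr 1; ring⟩)⟩
      refine ⟨fun t => Real.exp (-(b^2)*t) • (⟨_, Submodule.subset_span hfS⟩ : V),
        ?_, ?_, ?_⟩
      · show Real.exp (-(b^2)*0) • (fun x => Real.cos (b*x)) = _
        rw [show -(b^2)*(0:ℝ) = 0 by ring, Real.exp_zero, one_smul]
        funext x; rw [hbdef]; congr 1; ring
      · intro t
        have hAf : Alin ⟨_, Submodule.subset_span hfS⟩ =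
            (-(b^2)) • (⟨_, Submodule.subset_span hfS⟩ : V) := by
          apply Subtype.ext
          rw [hA]
          funext x
          simpa [smul_eq_mul] using dd_cos b x
        have hES : ∀ s : ℝ, E (Real.exp (-(b^2)*s) • (⟨_, Submodule.subset_span hfS⟩ : V)) =
            Real.exp (-(b^2)*s) • E ⟨_, Submodule.subset_span hfS⟩ := fun s => map_smul E _ _
        simp only [hES]
        have htot := (hasDerivAt_expdecay b t).smul_const (E ⟨_, Submodule.subset_span hfS⟩)
        refine htot.congr_deriv ?_
        simp only [hAf, map_smul, smul_smul]
      · intro t ht x hx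
        have h1 : |(↑(Real.exp (-(b^2)*t) • (⟨_, Submodule.subset_span hfS⟩ : V)) : ℝ → ℝ) x|
            = Real.exp (-(b^2)*t) * |Real.cos (b*x)| := by
          show |Real.exp (-(b^2)*t) • Real.cos (b*x)| = _
          rw [smul_eq_mul, abs_mul, abs_of_pos (Real.exp_pos _)]
        rw [h1]
        calc Real.exp (-(b^2)*t) * |Real.cos (b*x)|
            ≤ Real.exp (-(b^2)*t) * 1 :=
              mul_le_mul_of_nonneg_left (Real.abs_cos_le_one _) (Real.exp_pos _).le
          _ = Real.exp (-(b^2)*t) := mul_one _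
          _ ≤ Real.exp (-Real.pi^2 * t/H^2) := exp_decay_le H b t hb2 ht
          _ ≤ (Real.pi + 2*N*Real.pi^2/H^2) * (1 + t) * Real.exp (-Real.pi^2 * t / H^2) :=
              le_mul_of_one_le_left (Real.exp_pos _).le (one_le_prefac H t N hH ht)
    · -- linear-times-sine mode
      obtain ⟨e0, he0⟩ : ∃ e : ℝ, e = Real.pi / H := ⟨_, rfl⟩
      have he0pos : 0 < e0 := by rw [he0]; positivity
      have hfS : (fun x => e0 * x * Real.sin (b*x)) ∈ S := by
        refine ⟨k, hk1, hk2, Or.inr (Or.inr ⟨hke, ?_⟩)⟩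
        funext x
        rw [hbdef, he0, show (k:ℝ)*Real.pi/H*x = (k:ℝ)*Real.pi*x/H by ring]
        ring
      have hcS : (fun x => Real.cos (b*x)) ∈ S :=
        ⟨k, hk1, hk2, Or.inr (Or.inl ⟨hke, by funext x; rw [hbdef]; congr 1; ring⟩)⟩
      refine ⟨fun t => Real.exp (-(b^2)*t) •
          ((⟨_, Submodule.subset_span hfS⟩ : V) +
            (t*(2*e0*b)) • (⟨_, Submodule.subset_span hcS⟩ : V)), ?_, ?_, ?_⟩
      · show Real.exp (-(b^2)*0) • ((fun x => e0 * x * Real.sin (b*x)) +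
            ((0:ℝ)*(2*e0*b)) • (fun x => Real.cos (b*x))) = _
        rw [show (0:ℝ)*(2*e0*b) = 0 by ring, zero_smul, add_zero,
          show -(b^2)*(0:ℝ) = 0 by ring, Real.exp_zero, one_smul]
        funext x
        rw [hbdef, he0, show (k:ℝ)*Real.pi/H*x = (k:ℝ)*Real.pi*x/H by ring]
        ring
      · intro t
        have hAf : Alin ⟨_, Submodule.subset_span hfS⟩ =
            (2*e0*b) • (⟨_, Submodule.subset_span hcS⟩ : V) +
              (-(b^2)) • (⟨_, Submodule.subset_span hfS⟩ : V) := by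
          apply Subtype.ext
          rw [hA]
          funext x
          simpa [smul_eq_mul] using dd_p e0 b x
        have hAc : Alin ⟨_, Submodule.subset_span hcS⟩ =
            (-(b^2)) • (⟨_, Submodule.subset_span hcS⟩ : V) := by
          apply Subtype.ext
          rw [hA]
          funext x
          simpa [smul_eq_mul] using dd_cos b x
        have hES : ∀ s : ℝ, E (Real.exp (-(b^2)*s) •
            ((⟨_, Submodule.subset_span hfS⟩ : V) +
              (s*(2*e0*b)) • (⟨_, Submodule.subset_span hcS⟩ : V))) =
            Real.exp (-(b^2)*s) • E ⟨_, Submodule.subset_span hfS⟩ +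
            (Real.exp (-(b^2)*s) * (s*(2*e0*b))) • E ⟨_, Submodule.subset_span hcS⟩ := by
          intro s
          rw [map_smul, map_add, map_smul, smul_add, smul_smul]
        simp only [hES]
        have h2 : HasDerivAt (fun s : ℝ => s*(2*e0*b)) (2*e0*b) t := by
          simpa using (hasDerivAt_id t).mul_const (2*e0*b)
        have hψ := (hasDerivAt_expdecay b t).mul h2
        have htot := ((hasDerivAt_expdecay b t).smul_const
            (E ⟨_, Submodule.subset_span hfS⟩)).add
          (hψ.smul_const (E ⟨_, Submodule.subset_span hcS⟩))
        refine htot.congr_deriv ?_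
        simp only [map_smul, map_add, hAf, hAc]
        module
      · intro t ht x hx
        have hxb : |x| ≤ H := abs_le.2 ⟨hx.1, hx.2⟩
        have h1 : (↑(Real.exp (-(b^2)*t) •
            ((⟨_, Submodule.subset_span hfS⟩ : V) +
              (t*(2*e0*b)) • (⟨_, Submodule.subset_span hcS⟩ : V))) : ℝ → ℝ) x
            = Real.exp (-(b^2)*t) *
              (e0*x*Real.sin (b*x) + t*(2*e0*b) * Real.cos (b*x)) := by
          show Real.exp (-(b^2)*t) • (e0*x*Real.sin (b*x) +
            (t*(2*e0*b)) • Real.cos (b*x)) = _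
          rw [smul_eq_mul, smul_eq_mul]
        rw [h1]
        have hs1 : |e0*x*Real.sin (b*x)| ≤ Real.pi := by
          have h2 : |e0*x| ≤ Real.pi := by
            rw [abs_mul, abs_of_pos he0pos, he0]
            calc Real.pi/H*|x| ≤ Real.pi/H*H :=
                mul_le_mul_of_nonneg_left hxb (by positivity)
              _ = Real.pi := by field_simp
          calc |e0*x*Real.sin (b*x)| = |e0*x| * |Real.sin (b*x)| := abs_mul _ _
            _ ≤ |e0*x| * 1 := mul_le_mul_of_nonneg_left (Real.abs_sin_le_one _) (abs_nonneg _)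
            _ = |e0*x| := mul_one _
            _ ≤ Real.pi := h2
        have hs2 : |t*(2*e0*b) * Real.cos (b*x)| ≤ t * (2*N*Real.pi^2/H^2) := by
          have hμ : 2*e0*b ≤ 2*N*Real.pi^2/H^2 := by
            rw [he0, hbdef]
            calc 2*(Real.pi/H)*((k:ℝ)*Real.pi/H) = (k:ℝ)*(2*Real.pi^2/H^2) := by ring
              _ ≤ (N:ℝ)*(2*Real.pi^2/H^2) := mul_le_mul_of_nonneg_right hkN (by positivity)
              _ = 2*N*Real.pi^2/H^2 := by ring
          have hnn2 : 0 ≤ t*(2*e0*b) := mul_nonneg ht (by positivity)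
          calc |t*(2*e0*b) * Real.cos (b*x)| = |t*(2*e0*b)| * |Real.cos (b*x)| := abs_mul _ _
            _ ≤ |t*(2*e0*b)| * 1 := mul_le_mul_of_nonneg_left (Real.abs_cos_le_one _) (abs_nonneg _)
            _ = t*(2*e0*b) := by rw [mul_one, abs_of_nonneg hnn2]
            _ ≤ t * (2*N*Real.pi^2/H^2) := mul_le_mul_of_nonneg_left hμ ht
        have hin : |e0*x*Real.sin (b*x) + t*(2*e0*b) * Real.cos (b*x)| ≤
            Real.pi + t * (2*N*Real.pi^2/H^2) :=
          (abs_add_le _ _).trans (add_le_add hs1 hs2)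
        have hnn : (0:ℝ) ≤ 2*N*Real.pi^2/H^2 := by positivity
        calc |Real.exp (-(b^2)*t) * (e0*x*Real.sin (b*x) + t*(2*e0*b) * Real.cos (b*x))|
            = Real.exp (-(b^2)*t) *
              |e0*x*Real.sin (b*x) + t*(2*e0*b) * Real.cos (b*x)| := by
              rw [abs_mul, abs_of_pos (Real.exp_pos _)]
          _ ≤ Real.exp (-(b^2)*t) * (Real.pi + t * (2*N*Real.pi^2/H^2)) :=
              mul_le_mul_of_nonneg_left hin (Real.exp_pos _).le
          _ ≤ Real.exp (-Real.pi^2 * t/H^2) * (Real.pi + t * (2*N*Real.pi^2/H^2)) := by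
              apply mul_le_mul_of_nonneg_right (exp_decay_le H b t hb2 ht)
              have := Real.pi_pos
              nlinarith [mul_nonneg ht hnn]
          _ ≤ (Real.pi + 2*N*Real.pi^2/H^2) * (1 + t) * Real.exp (-Real.pi^2 * t / H^2) := by
              rw [mul_comm]
              apply mul_le_mul_of_nonneg_right ?_ (Real.exp_pos _).le
              nlinarith [mul_nonneg (Real.pi_pos.le) ht, mul_nonneg hnn ht]
  -- decompose the initial data into modes
  obtain ⟨n, a, g, hsum⟩ := Submodule.mem_span_set'.1 (hspan 0)
  choose sol hsol0 hsol' hsolb using fun i : Fin n => mode_flow ((g i) : ℝ → ℝ) (g i).2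
  -- the explicit solution
  set y : ℝ → V := fun t => ∑ i, a i • sol i t with hydef
  have hy0 : ((y 0 : ℝ → ℝ)) = fun x => u x 0 - U := by
    show V.subtype (∑ i, a i • sol i 0) = _
    rw [map_sum]
    simp only [map_smul, Submodule.coe_subtype]
    simp only [hsol0]
    exact hsum
  have hy' : ∀ t : ℝ, HasDerivAt (fun s => E (y s)) (E (Alin (y t))) t := by
    intro t
    have hEy : ∀ s : ℝ, E (y s) = ∑ i, a i • E (sol i s) := by
      intro s
      rw [hydef]
      simp only [map_sum, map_smul]
    have hEt : E (Alin (y t)) = ∑ i, a i • E (Alin (sol i t)) := by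
      rw [hydef]
      simp only [map_sum, map_smul]
    simp only [hEy, hEt]
    exact HasDerivAt.fun_sum fun i _ => ((hsol' i t).fun_const_smul (a i))
  -- uniqueness of solutions of the linear ODE
  have hkey : ∀ T : ℝ, 0 ≤ T → (⟨fun x => u x T - U, hspan T⟩ : V) = y T := by
    intro T hT
    have huniq := ODE_solution_unique (v := fun _ p => B p) (K := ‖B‖₊)
      (f := fun s => E (⟨fun x => u x s - U, hspan s⟩ : V)) (g := fun s => E (y s))
      (a := 0) (b := T)
      (fun _ => B.lipschitz)
      (fun s _ => (hc' s).continuousAt.continuousWithinAt)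
      (fun s _ => by
        show HasDerivWithinAt (fun s => E (⟨fun x => u x s - U, hspan s⟩ : V))
          (B (E (⟨fun x => u x s - U, hspan s⟩ : V))) (Set.Ici s) s
        rw [hBE]
        exact (hc' s).hasDerivWithinAt)
      (fun s _ => (hy' s).continuousAt.continuousWithinAt)
      (fun s _ => by
        show HasDerivWithinAt (fun s => E (y s)) (B (E (y s))) (Set.Ici s) s
        rw [hBE]
        exact (hy' s).hasDerivWithinAt)
      (congrArg E (Subtype.ext hy0.symm))
    exact hEinj (huniq ⟨hT, le_refl T⟩)
  -- conclusion
  refine ⟨(∑ i, |a i|) * (Real.pi + 2*N*Real.pi^2/H^2), ?_⟩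
  intro t ht x hx
  have hxeq : u x t - U = ((y t : ℝ → ℝ)) x := by
    have h5 := congrArg (fun v : V => (v : ℝ → ℝ) x) (hkey t ht)
    simpa using h5
  have hyx : ((y t : ℝ → ℝ)) x = ∑ i, a i * ((sol i t : ℝ → ℝ) x) := by
    show V.subtype (∑ i, a i • sol i t) x = _
    rw [map_sum]
    simp [Finset.sum_apply, smul_eq_mul]
  rw [hxeq, hyx]
  calc |∑ i, a i * ((sol i t : ℝ → ℝ) x)| ≤ ∑ i, |a i * ((sol i t : ℝ → ℝ) x)| :=
        Finset.abs_sum_le_sum_abs _ _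
    _ ≤ ∑ i, |a i| * ((Real.pi + 2*N*Real.pi^2/H^2) * (1 + t) *
          Real.exp (-Real.pi^2 * t / H^2)) := by
        refine Finset.sum_le_sum fun i _ => ?_
        rw [abs_mul]
        exact mul_le_mul_of_nonneg_left (hsolb i t ht x hx) (abs_nonneg _)
    _ = (∑ i, |a i|) * ((Real.pi + 2*N*Real.pi^2/H^2) * (1 + t) *
          Real.exp (-Real.pi^2 * t / H^2)) := by
        rw [← Finset.sum_mul]
    _ = (∑ i, |a i|) * (Real.pi + 2*N*Real.pi^2/H^2) * (1 + t) *
          Real.exp (-Real.pi^2 * t / H^2) := by ring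
end

section
/- Let β > 0 and let φ : ℝ → ℝ be continuous and bounded with lim_{t→∞} (1/T)∫_0^T φ = c (Cesàro mean c). Then the Cesàro mean of Z_β φ exists and equals c/β: lim_{T→∞} (1/T) ∫_0^T (Z_β φ)(t) dt = c/β. -/
open MeasureTheory Real Filter

open intervalIntegral in
lemma intervalIntegral_expMul {β : ℝ} (hβ : 0 < β) (y t : ℝ) :
    ∫ τ in y..t, Real.exp (β * τ) = (Real.exp (β * t) - Real.exp (β * y)) / β := by
  have h1 : ∫ τ in y..t, Real.exp (β * τ) = β⁻¹ • ∫ x in β*y..β*t, Real.exp x := by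
    simpa using intervalIntegral.integral_comp_mul_left (fun x => Real.exp x) hβ.ne'
  rw [h1, integral_exp, smul_eq_mul, inv_mul_eq_div]

lemma expMul_integrableOn_Iic {β : ℝ} (hβ : 0 < β) (t : ℝ) :
    IntegrableOn (fun τ : ℝ => Real.exp (β * τ)) (Set.Iic t) := by
  refine integrableOn_Iic_of_intervalIntegral_norm_bounded
    (Real.exp (β * t) / β) t
    (fun y => ((Real.continuous_exp.comp
      (continuous_const.mul continuous_id)).intervalIntegrable _ _).1)
    tendsto_id (Filter.Eventually.of_forall fun y => ?_)
  have hn : ∀ τ : ℝ, ‖Real.exp (β * τ)‖ = Real.exp (β * τ) := fun τ => by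
    rw [Real.norm_eq_abs, abs_of_pos (Real.exp_pos _)]
  show (∫ x in (id y : ℝ)..t, ‖Real.exp (β * x)‖) ≤ Real.exp (β * t) / β
  simp only [hn, id_eq]
  rw [intervalIntegral_expMul hβ]
  gcongr
  have := (Real.exp_pos (β * y)).le; linarith

lemma integral_expMul_Iic {β : ℝ} (hβ : 0 < β) (t : ℝ) :
    ∫ τ in Set.Iic t, Real.exp (β * τ) = Real.exp (β * t) / β := by
  have h := intervalIntegral_tendsto_integral_Iic t (expMul_integrableOn_Iic hβ t) tendsto_id
  have h2 : Tendsto (fun y : ℝ => ∫ τ in y..t, Real.exp (β * τ)) atBot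
      (nhds (Real.exp (β * t) / β)) := by
    simp only [intervalIntegral_expMul hβ]
    have hexp : Tendsto (fun y : ℝ => Real.exp (β * y)) atBot (nhds 0) := by
      apply Real.tendsto_exp_atBot.comp
      exact (tendsto_const_mul_atBot_of_pos hβ).2 tendsto_id
    have := ((tendsto_const_nhds (x := Real.exp (β * t))).sub hexp).div_const β
    simpa using this
  exact tendsto_nhds_unique h h2

theorem stmt19 (β c : ℝ) (hβ : 0 < β) (φ : ℝ → ℝ) (hφc : Continuous φ)
    (hφb : ∃ C, ∀ t, |φ t| ≤ C)
    (hmean : Tendsto (fun T : ℝ => (1 / T) * ∫ t in (0:ℝ)..T, φ t) atTop (nhds c)) :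
    Tendsto (fun T : ℝ => (1 / T) * ∫ t in (0:ℝ)..T, Z β φ t) atTop (nhds (c / β)) := by
  obtain ⟨C, hC⟩ := hφb
  have hC0 : 0 ≤ C := le_trans (abs_nonneg _) (hC 0)
  -- integrability of exp(βτ) φ τ on Iic t
  have hg : ∀ t : ℝ, IntegrableOn (fun τ : ℝ => Real.exp (β * τ) * φ τ) (Set.Iic t) := by
    intro t
    refine Integrable.mono' ((expMul_integrableOn_Iic hβ t).const_mul C)
      ((Real.continuous_exp.comp (continuous_const.mul continuous_id)).mul hφc).aestronglyMeasurable
      (Filter.Eventually.of_forall fun τ => ?_)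
    rw [Real.norm_eq_abs, abs_mul, abs_of_pos (Real.exp_pos _), mul_comm C]
    exact mul_le_mul_of_nonneg_left (hC τ) (Real.exp_pos _).le
  set F : ℝ → ℝ := fun t => ∫ τ in Set.Iic t, Real.exp (β * τ) * φ τ with hF
  have hZF : ∀ t : ℝ, Z β φ t = Real.exp (-β * t) * F t := by
    intro t
    rw [hF, Z]
    simp only
    rw [← MeasureTheory.integral_const_mul]
    congr 1 with τ
    rw [← mul_assoc, ← Real.exp_add]
    ring_nf
  -- derivative of F
  have hcont : Continuous (fun τ : ℝ => Real.exp (β * τ) * φ τ) :=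
    (Real.continuous_exp.comp (continuous_const.mul continuous_id)).mul hφc
  have hFd : ∀ t : ℝ, HasDerivAt F (Real.exp (β * t) * φ t) t := by
    intro t
    have key : F = fun s : ℝ => F 0 + ∫ τ in (0:ℝ)..s, Real.exp (β * τ) * φ τ := by
      funext s
      have := intervalIntegral.integral_Iic_sub_Iic (hg 0) (hg s)
      rw [hF]
      simp only at this ⊢
      linarith [this]
    rw [key]
    exact ((intervalIntegral.integral_hasDerivAt_right (hcont.intervalIntegrable 0 t)
      (hcont.stronglyMeasurableAtFilter _ _) hcont.continuousAt).const_add (F 0))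
  -- derivative of Z
  have hone : ∀ t : ℝ, Real.exp (-β * t) * Real.exp (β * t) = 1 := by
    intro t
    rw [← Real.exp_add, show -β * t + β * t = 0 by ring, Real.exp_zero]
  have hZd : ∀ t : ℝ, HasDerivAt (Z β φ) (φ t - β * Z β φ t) t := by
    intro t
    have h0 : HasDerivAt (fun s : ℝ => -β * s) (-β) t := by
      simpa using (hasDerivAt_id t).const_mul (-β)
    have he : HasDerivAt (fun s : ℝ => Real.exp (-β * s)) (Real.exp (-β * t) * (-β)) t :=
      h0.exp
    have hp := he.mul (hFd t)
    have heq : ((fun s : ℝ => Real.exp (-β * s)) * F) = Z β φ := by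
      funext s; simp only [Pi.mul_apply, hZF s]
    rw [heq] at hp
    refine hp.congr_deriv ?_
    rw [hZF t, show Real.exp (-β * t) * (-β) * F t
        = -β * (Real.exp (-β * t) * F t) by ring,
      show Real.exp (-β * t) * (Real.exp (β * t) * φ t)
        = (Real.exp (-β * t) * Real.exp (β * t)) * φ t by ring, hone, one_mul]
    ring
  -- continuity of Z
  have hZc : Continuous (Z β φ) := continuous_iff_continuousAt.2
    (fun t => (hZd t).differentiableAt.continuousAt)
  -- FTC
  have hftc : ∀ T : ℝ, ∫ t in (0:ℝ)..T, (φ t - β * Z β φ t) = Z β φ T - Z β φ 0 := by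
    intro T
    exact intervalIntegral.integral_eq_sub_of_hasDerivAt (fun t _ => hZd t)
      ((hφc.sub (continuous_const.mul hZc)).intervalIntegrable _ _)
  have hkey : ∀ T : ℝ, ∫ t in (0:ℝ)..T, Z β φ t
      = ((∫ t in (0:ℝ)..T, φ t) - (Z β φ T - Z β φ 0)) / β := by
    intro T
    have h1 : ∫ t in (0:ℝ)..T, (φ t - β * Z β φ t)
        = (∫ t in (0:ℝ)..T, φ t) - β * ∫ t in (0:ℝ)..T, Z β φ t := by
      rw [intervalIntegral.integral_sub (hφc.intervalIntegrable _ _)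
        (show IntervalIntegrable (fun t => β * Z β φ t) volume 0 T from
          (continuous_const.mul hZc).intervalIntegrable _ _),
        intervalIntegral.integral_const_mul]
    have h2 := hftc T
    rw [h1] at h2
    field_simp
    linarith
  -- bound on Z
  have hZb : ∀ t : ℝ, |Z β φ t| ≤ C / β := by
    intro t
    have hle : ‖Z β φ t‖ ≤ ∫ τ in Set.Iic t, C * Real.exp (-β * (t - τ)) := by
      refine norm_integral_le_of_norm_le ?_ (Filter.Eventually.of_forall fun τ => ?_)
      · have h3 : IntegrableOn (fun τ : ℝ => C * (Real.exp (-β * t) * Real.exp (β * τ)))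
            (Set.Iic t) := ((expMul_integrableOn_Iic hβ t).const_mul _).const_mul C
        refine h3.congr_fun (fun τ _ => ?_) measurableSet_Iic
        dsimp only; rw [← Real.exp_add]; ring_nf
      · rw [Real.norm_eq_abs, abs_mul, abs_of_pos (Real.exp_pos _), mul_comm]
        exact mul_le_mul_of_nonneg_right (hC τ) (Real.exp_pos _).le
    have hval : ∫ τ in Set.Iic t, C * Real.exp (-β * (t - τ)) = C / β := by
      have hre : ∀ τ : ℝ, C * Real.exp (-β * (t - τ))
          = (C * Real.exp (-β * t)) * Real.exp (β * τ) := by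
        intro τ; rw [mul_assoc, ← Real.exp_add]; ring_nf
      simp only [hre]
      rw [MeasureTheory.integral_const_mul, integral_expMul_Iic hβ t]
      linear_combination (C / β) * hone t
    rw [Real.norm_eq_abs, hval] at hle
    exact hle
  -- remainder term tends to 0
  have hrem : Tendsto (fun T : ℝ => (1 / T) * (Z β φ T - Z β φ 0)) atTop (nhds 0) := by
    have hb : ∀ᶠ T : ℝ in atTop, ‖(1 / T) * (Z β φ T - Z β φ 0)‖ ≤ (2 * (C / β)) * (1 / T) := by
      filter_upwards [eventually_ge_atTop (1:ℝ)] with T hT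
      have hT0 : (0:ℝ) < T := lt_of_lt_of_le one_pos hT
      rw [norm_mul, Real.norm_eq_abs, Real.norm_eq_abs, mul_comm,
        abs_of_pos (by positivity : (0:ℝ) < 1 / T)]
      have h1 : |Z β φ T - Z β φ 0| ≤ 2 * (C / β) := by
        have a := abs_le.1 (hZb T); have b := abs_le.1 (hZb 0)
        rw [abs_sub_le_iff]
        constructor <;> linarith [a.1, a.2, b.1, b.2]
      exact mul_le_mul_of_nonneg_right h1 (by positivity)
    have hlim : Tendsto (fun T : ℝ => (2 * (C / β)) * (1 / T)) atTop (nhds 0) := by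
      have h := Tendsto.const_mul (2 * (C / β)) (tendsto_inv_atTop_zero (𝕜 := ℝ))
      simpa [one_div] using h
    exact squeeze_zero_norm' hb hlim
  have hfinal : Tendsto (fun T : ℝ => (1 / β) * ((1 / T) * ∫ t in (0:ℝ)..T, φ t)
      - (1 / β) * ((1 / T) * (Z β φ T - Z β φ 0))) atTop (nhds (c / β)) := by
    have h1 := (hmean.const_mul (1 / β)).sub (hrem.const_mul (1 / β))
    simpa [one_div, div_eq_inv_mul] using h1
  refine hfinal.congr (fun T => ?_)
  rw [hkey T]
  field_simp
end
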